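/- Let X ← Z → G × X' be correspondences and consider the symmetric monoidal structure on a span category. Given a span α : A × G ← C → G, define ρ_α(Z) = Z ×_{G×G} C (fiber product over the two projections to G). Then ρ_α is functorial: for a morphism Z' : X' → X'' acting by postcomposition on the G-component-free leg, ρ_α((id_G ⊗ Z') ∘ Z) ≅ (id_A ⊗ Z') ∘ ρ_α(Z), and similarly for precomposition. -/

import Mathlib

open CategoryTheory Limits

noncomputable section

variable {C : Type*} [Category C] [HasPullbacks C] [HasBinaryProducts C]

/-- The map `Z ⟶ G ⨯ G` given by the two `G`-components of a span `G ⨯ Y ← Z → G ⨯ X`. -/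
def toGG {Z Y X G : C} (zl : Z ⟶ G ⨯ Y) (zr : Z ⟶ G ⨯ X) : Z ⟶ G ⨯ G :=
  prod.lift (zl ≫ prod.fst) (zr ≫ prod.fst)

/-- The map `C ⟶ G ⨯ G` given by the two `G`-components of a span `A ⨯ G ← C → G`. -/
def alphaToGG {Cc A G : C} (cl : Cc ⟶ A ⨯ G) (cr : Cc ⟶ G) : Cc ⟶ G ⨯ G :=
  prod.lift (cl ≫ prod.snd) cr

/-- `ρ_α(Z) := Z ×_{G ⨯ G} C`, for a span `Z` from `G ⨯ Y` to `G ⨯ X` and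
`α = (A ⨯ G ← C → G)`. -/
def rhoObj {Z Y X G Cc A : C} (zl : Z ⟶ G ⨯ Y) (zr : Z ⟶ G ⨯ X)
    (cl : Cc ⟶ A ⨯ G) (cr : Cc ⟶ G) : C :=
  pullback (toGG zl zr) (alphaToGG cl cr)

/-- The left leg `ρ_α(Z) ⟶ A ⨯ Y`. -/
def rhoLeft {Z Y X G Cc A : C} (zl : Z ⟶ G ⨯ Y) (zr : Z ⟶ G ⨯ X)
    (cl : Cc ⟶ A ⨯ G) (cr : Cc ⟶ G) : rhoObj zl zr cl cr ⟶ A ⨯ Y :=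
  prod.lift (pullback.snd (toGG zl zr) (alphaToGG cl cr) ≫ cl ≫ prod.fst)
    (pullback.fst (toGG zl zr) (alphaToGG cl cr) ≫ zl ≫ prod.snd)

/-- The right leg `ρ_α(Z) ⟶ X`. -/
def rhoRight {Z Y X G Cc A : C} (zl : Z ⟶ G ⨯ Y) (zr : Z ⟶ G ⨯ X)
    (cl : Cc ⟶ A ⨯ G) (cr : Cc ⟶ G) : rhoObj zl zr cl cr ⟶ X :=
  pullback.fst (toGG zl zr) (alphaToGG cl cr) ≫ zr ≫ prod.snd

attribute [local simp] prod.lift_fst prod.lift_snd prod.lift_fst_assoc prod.lift_snd_assoc pullback.lift_fst pullback.lift_snd pullback.lift_fst_assoc pullback.lift_snd_assoc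


set_option maxHeartbeats 2000000 in
/-- **Functoriality of `ρ_α` for spans** (composition on either side by `id ⊗ Z'`).

(1) For a span `Z' = (X₁ ← Z' → X₂)` acting by postcomposition on the `G`-free leg:
`ρ_α((id_G ⊗ Z') ∘ Z) ≅ Z' ∘ ρ_α(Z)`, compatibly with both legs.

(2) For a span `Z'' = (Y' ← Z'' → Y)` acting by precomposition:
`ρ_α(Z ∘ (id_G ⊗ Z'')) ≅ ρ_α(Z) ∘ (id_A ⊗ Z'')`, compatibly with both legs. -/
theorem rho_compatible_with_composition
    {Z Y X₁ X₂ Y' G Cc A Z' Z'' : C}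
    (zl : Z ⟶ G ⨯ Y) (zr : Z ⟶ G ⨯ X₁)
    (cl : Cc ⟶ A ⨯ G) (cr : Cc ⟶ G)
    (z'l : Z' ⟶ X₁) (z'r : Z' ⟶ X₂)
    (z''l : Z'' ⟶ Y') (z''r : Z'' ⟶ Y) :
    (∃ e : rhoObj (C := C)
          (pullback.fst zr (prod.map (𝟙 G) z'l) ≫ zl)
          (pullback.snd zr (prod.map (𝟙 G) z'l) ≫ prod.map (𝟙 G) z'r) cl cr ≅
        pullback (rhoRight zl zr cl cr) z'l,
      e.hom ≫ pullback.fst (rhoRight zl zr cl cr) z'l ≫ rhoLeft zl zr cl cr =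
        rhoLeft (pullback.fst zr (prod.map (𝟙 G) z'l) ≫ zl)
          (pullback.snd zr (prod.map (𝟙 G) z'l) ≫ prod.map (𝟙 G) z'r) cl cr ∧
      e.hom ≫ pullback.snd (rhoRight zl zr cl cr) z'l ≫ z'r =
        rhoRight (pullback.fst zr (prod.map (𝟙 G) z'l) ≫ zl)
          (pullback.snd zr (prod.map (𝟙 G) z'l) ≫ prod.map (𝟙 G) z'r) cl cr) ∧
    (∃ e : rhoObj (C := C)
          (pullback.fst (prod.map (𝟙 G) z''r) zl ≫ prod.map (𝟙 G) z''l)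
          (pullback.snd (prod.map (𝟙 G) z''r) zl ≫ zr) cl cr ≅
        pullback (prod.map (𝟙 A) z''r) (rhoLeft zl zr cl cr),
      e.hom ≫ pullback.fst (prod.map (𝟙 A) z''r) (rhoLeft zl zr cl cr) ≫
          prod.map (𝟙 A) z''l =
        rhoLeft (pullback.fst (prod.map (𝟙 G) z''r) zl ≫ prod.map (𝟙 G) z''l)
          (pullback.snd (prod.map (𝟙 G) z''r) zl ≫ zr) cl cr ∧
      e.hom ≫ pullback.snd (prod.map (𝟙 A) z''r) (rhoLeft zl zr cl cr) ≫
          rhoRight zl zr cl cr =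
        rhoRight (pullback.fst (prod.map (𝟙 G) z''r) zl ≫ prod.map (𝟙 G) z''l)
          (pullback.snd (prod.map (𝟙 G) z''r) zl ≫ zr) cl cr) := by
  constructor
  · -- part (1): postcomposition
    delta rhoObj rhoLeft rhoRight
    set m1 := prod.map (𝟙 G) z'l with hm1
    set m2 := prod.map (𝟙 G) z'r with hm2
    set f := toGG zl zr with hf
    set g := alphaToGG cl cr with hgdef
    set F := toGG (pullback.fst zr m1 ≫ zl) (pullback.snd zr m1 ≫ m2) with hFdef
    set rr := pullback.fst f g ≫ zr ≫ prod.snd with hrrdef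
    have hw : (pullback.fst zr m1) ≫ zr = (pullback.snd zr m1) ≫ m1 := pullback.condition
    have hq : (pullback.fst f g) ≫ f = (pullback.snd f g) ≫ g := pullback.condition
    have hr : (pullback.fst rr z'l) ≫ rr = (pullback.snd rr z'l) ≫ z'l := pullback.condition
    have hF : F = (pullback.fst zr m1) ≫ f := by
      apply Limits.prod.hom_ext
      · simp [hFdef, hf, toGG]
      · simp [hFdef, hf, toGG, reassoc_of% hw, hm1, hm2]
    have hp1 : ((pullback.fst F g) ≫ (pullback.fst zr m1)) ≫ f = (pullback.snd F g) ≫ g := by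
      rw [Category.assoc, ← hF]; exact pullback.condition
    have hhom : pullback.lift ((pullback.fst F g) ≫ (pullback.fst zr m1)) (pullback.snd F g) hp1 ≫ rr
        = ((pullback.fst F g) ≫ (pullback.snd zr m1) ≫ prod.snd) ≫ z'l := by
      simp [hrrdef, hm1, reassoc_of% hw]
    have hcond : ((pullback.fst rr z'l) ≫ (pullback.fst f g)) ≫ zr
        = prod.lift ((pullback.fst rr z'l) ≫ (pullback.fst f g) ≫ zr ≫ prod.fst) (pullback.snd rr z'l) ≫ m1 := by
      apply Limits.prod.hom_ext
      · simp [hm1]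
      · simpa [hm1, hrrdef] using hr
    have hcond2 : pullback.lift ((pullback.fst rr z'l) ≫ (pullback.fst f g))
          (prod.lift ((pullback.fst rr z'l) ≫ (pullback.fst f g) ≫ zr ≫ prod.fst) (pullback.snd rr z'l)) hcond ≫ F
        = ((pullback.fst rr z'l) ≫ (pullback.snd f g)) ≫ g := by
      rw [hF]; simp [hq, reassoc_of% hq]
    refine ⟨⟨pullback.lift (pullback.lift ((pullback.fst F g) ≫ (pullback.fst zr m1)) (pullback.snd F g) hp1)
        ((pullback.fst F g) ≫ (pullback.snd zr m1) ≫ prod.snd) hhom,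
      pullback.lift (pullback.lift ((pullback.fst rr z'l) ≫ (pullback.fst f g))
        (prod.lift ((pullback.fst rr z'l) ≫ (pullback.fst f g) ≫ zr ≫ prod.fst) (pullback.snd rr z'l)) hcond) ((pullback.fst rr z'l) ≫ (pullback.snd f g)) hcond2,
      ?_, ?_⟩, ?_, ?_⟩
    all_goals unfold rr F f g m1 m2
    · apply pullback.hom_ext
      · apply pullback.hom_ext
        · simp
        · apply Limits.prod.hom_ext
          · unfold m1 at hw; simp [hm1, reassoc_of% hw]
          · simp
      · simp
    · apply pullback.hom_ext
      · apply pullback.hom_ext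
        · simp
        · simp
      · simp
    · apply Limits.prod.hom_ext
      · simp
      · simp
    · simp [hm2]
  · -- part (2): precomposition
    delta rhoObj rhoLeft rhoRight
    set m1 := prod.map (𝟙 G) z''r with hm1
    set m2 := prod.map (𝟙 G) z''l with hm2
    set f := toGG zl zr with hf
    set g := alphaToGG cl cr with hgdef
    set F := toGG (pullback.fst m1 zl ≫ m2) (pullback.snd m1 zl ≫ zr) with hFdef
    set v := prod.map (𝟙 A) z''r with hv
    set ll := prod.lift (pullback.snd f g ≫ cl ≫ prod.fst)
      (pullback.fst f g ≫ zl ≫ prod.snd) with hlldef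
    have hw : (pullback.fst m1 zl) ≫ m1 = (pullback.snd m1 zl) ≫ zl := pullback.condition
    have hq : (pullback.fst f g) ≫ f = (pullback.snd f g) ≫ g := pullback.condition
    have hr : (pullback.fst v ll) ≫ v = (pullback.snd v ll) ≫ ll := pullback.condition
    have hwfst : (pullback.fst m1 zl) ≫ prod.fst = (pullback.snd m1 zl) ≫ zl ≫ prod.fst := by
      simpa [hm1] using congrArg (fun t => t ≫ prod.fst) hw
    have hwsnd : (pullback.fst m1 zl) ≫ prod.snd ≫ z''r = (pullback.snd m1 zl) ≫ zl ≫ prod.snd := by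
      simpa [hm1] using congrArg (fun t => t ≫ prod.snd) hw
    have hrfst : (pullback.fst v ll) ≫ prod.fst = (pullback.snd v ll) ≫ (pullback.snd f g) ≫ cl ≫ prod.fst := by
      simpa [hv, hlldef] using congrArg (fun t => t ≫ prod.fst) hr
    have hrsnd : (pullback.fst v ll) ≫ prod.snd ≫ z''r = (pullback.snd v ll) ≫ (pullback.fst f g) ≫ zl ≫ prod.snd := by
      simpa [hv, hlldef] using congrArg (fun t => t ≫ prod.snd) hr
    have hF : F = (pullback.snd m1 zl) ≫ f := by
      apply Limits.prod.hom_ext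
      · simp [hFdef, hf, toGG, hm2, hwfst, reassoc_of% hwfst]
      · simp [hFdef, hf, toGG]
    have hp1 : ((pullback.fst F g) ≫ (pullback.snd m1 zl)) ≫ f = (pullback.snd F g) ≫ g := by
      rw [Category.assoc, ← hF]; exact pullback.condition
    have hhom : prod.lift ((pullback.snd F g) ≫ cl ≫ prod.fst) ((pullback.fst F g) ≫ (pullback.fst m1 zl) ≫ prod.snd) ≫ v
        = pullback.lift ((pullback.fst F g) ≫ (pullback.snd m1 zl)) (pullback.snd F g) hp1 ≫ ll := by
      apply Limits.prod.hom_ext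
      · simp [hv, hlldef]
      · simp [hv, hlldef, hwsnd, reassoc_of% hwsnd]
    have hcond : prod.lift ((pullback.snd v ll) ≫ (pullback.fst f g) ≫ zl ≫ prod.fst) ((pullback.fst v ll) ≫ prod.snd) ≫ m1
        = ((pullback.snd v ll) ≫ (pullback.fst f g)) ≫ zl := by
      apply Limits.prod.hom_ext
      · simp [hm1]
      · simp [hm1, hrsnd]
    have hcond2 : pullback.lift
          (prod.lift ((pullback.snd v ll) ≫ (pullback.fst f g) ≫ zl ≫ prod.fst) ((pullback.fst v ll) ≫ prod.snd)) ((pullback.snd v ll) ≫ (pullback.fst f g))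
          hcond ≫ F
        = ((pullback.snd v ll) ≫ (pullback.snd f g)) ≫ g := by
      rw [hF]; simp [hq, reassoc_of% hq]
    refine ⟨⟨pullback.lift (prod.lift ((pullback.snd F g) ≫ cl ≫ prod.fst) ((pullback.fst F g) ≫ (pullback.fst m1 zl) ≫ prod.snd))
        (pullback.lift ((pullback.fst F g) ≫ (pullback.snd m1 zl)) (pullback.snd F g) hp1) hhom,
      pullback.lift (pullback.lift
        (prod.lift ((pullback.snd v ll) ≫ (pullback.fst f g) ≫ zl ≫ prod.fst) ((pullback.fst v ll) ≫ prod.snd)) ((pullback.snd v ll) ≫ (pullback.fst f g)) hcond)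
        ((pullback.snd v ll) ≫ (pullback.snd f g)) hcond2,
      ?_, ?_⟩, ?_, ?_⟩
    all_goals unfold ll v F f g m1 m2
    · apply pullback.hom_ext
      · apply pullback.hom_ext
        · apply Limits.prod.hom_ext
          · unfold m1 at hwfst; simp [hwfst, reassoc_of% hwfst]
          · simp
        · simp
      · simp
    · apply pullback.hom_ext
      · apply Limits.prod.hom_ext
        · unfold v ll f g at hrfst; simp [hrfst]
        · simp
      · apply pullback.hom_ext
        · simp
        · simp
    · apply Limits.prod.hom_ext
      · simp
      · simp [hm2]
    · simp

end
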